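/- arXiv:1805.04898 — 2 statements merged into one kernel-verified Lean document; each statement's English description precedes it below -/
import Mathlib

section
/- Under Assumptions Q1 and A1-i, for every payoff vector π ∈ ℝ^𝒜 and every action a ∈ 𝒜, the individual ex-ante first-order net gain satisfies g_{a*}[π] ≥ 0, and g_{a*}[π] = 0 if and only if π_a = max_{b∈𝒜} π_b. -/
open MeasureTheory Finset
open scoped Classical

/-- The maximal payoff among actions in `S` (zero for the empty set, which is
    always weighted by probability zero). -/
noncomputable def piStar {A : Type*} (π : A → ℝ) (S : Finset A) : ℝ :=
  if h : S.Nonempty then S.sup' h π else 0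

/-- `Q(q) = μ_Q((-∞, q])`. -/
noncomputable def Qfun (μQ : Measure ℝ) (q : ℝ) : ℝ := (μQ (Set.Iic q)).toReal

/-- The individual ex-ante first-order net gain `g_{a*}[π]`. -/
noncomputable def gain {A : Type*} [Fintype A] [DecidableEq A]
    (P : A → Finset A → ℝ) (μQ : Measure ℝ) (π : A → ℝ) (a : A) : ℝ :=
  ∑ A' ∈ (Finset.univ.erase a).powerset,
    P a A' * ∫ q, max (piStar π A' - π a - q) 0 ∂μQ

lemma ae_nonneg_of_Q1 (μQ : Measure ℝ) [IsProbabilityMeasure μQ]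
    (hQ1a : ∀ q : ℝ, q < 0 → Qfun μQ q = 0) : ∀ᵐ q ∂μQ, 0 ≤ q := by
  have hzero : ∀ q : ℝ, q < 0 → μQ (Set.Iic q) = 0 := by
    intro q hq
    have := hQ1a q hq
    have hfin : μQ (Set.Iic q) ≠ ⊤ := measure_ne_top _ _
    simpa [Qfun, ENNReal.toReal_eq_zero_iff, hfin] using this
  have hsub : Set.Iio (0:ℝ) ⊆ ⋃ n : ℕ, Set.Iic (-(1:ℝ)/(n+1)) := by
    intro x hx
    simp only [Set.mem_Iio] at hx
    obtain ⟨n, hn⟩ := exists_nat_one_div_lt (show (0:ℝ) < -x by linarith)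
    refine Set.mem_iUnion.2 ⟨n, ?_⟩
    simp only [Set.mem_Iic]
    have h2 : -(1:ℝ)/(n+1) = -((1:ℝ)/(n+1)) := by ring
    rw [h2]; linarith
  have h0 : μQ (Set.Iio 0) = 0 := by
    refine measure_mono_null hsub (measure_iUnion_null fun n => hzero _ ?_)
    have : (0:ℝ) < (n:ℝ)+1 := by positivity
    rw [div_neg_iff]; right; constructor <;> [norm_num; exact this]
  have : ∀ᵐ q ∂μQ, q ∉ Set.Iio (0:ℝ) := (ae_iff.2 (by simpa [Set.Iio] using h0))
  filter_upwards [this] with q hq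
  simpa [Set.mem_Iio, not_lt] using hq

lemma integrable_maxfun (μQ : Measure ℝ) [IsProbabilityMeasure μQ]
    (hae : ∀ᵐ q ∂μQ, 0 ≤ q) (d : ℝ) :
    Integrable (fun q => max (d - q) 0) μQ := by
  refine Integrable.mono' (integrable_const (max d 0)) ?_ ?_
  · exact (Continuous.max (by continuity) continuous_const).aestronglyMeasurable
  · filter_upwards [hae] with q hq
    rw [Real.norm_eq_abs, abs_of_nonneg (le_max_right _ _)]
    exact max_le_max (by linarith) le_rfl

lemma integral_maxfun_nonneg (μQ : Measure ℝ) (d : ℝ) :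
    0 ≤ ∫ q, max (d - q) 0 ∂μQ :=
  integral_nonneg fun q => le_max_right _ _

lemma integral_maxfun_zero (μQ : Measure ℝ) [IsProbabilityMeasure μQ]
    (hae : ∀ᵐ q ∂μQ, 0 ≤ q) (d : ℝ) (hd : d ≤ 0) :
    ∫ q, max (d - q) 0 ∂μQ = 0 := by
  have : ∀ᵐ q ∂μQ, max (d - q) 0 = 0 := by
    filter_upwards [hae] with q hq
    exact max_eq_right (by linarith)
  rw [integral_congr_ae this, integral_zero]

lemma integral_maxfun_pos (μQ : Measure ℝ) [IsProbabilityMeasure μQ]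
    (hae : ∀ᵐ q ∂μQ, 0 ≤ q)
    (hQ1b : ∀ q : ℝ, 0 < q → 0 < Qfun μQ q) (d : ℝ) (hd : 0 < d) :
    0 < ∫ q, max (d - q) 0 ∂μQ := by
  have hind : Integrable ((Set.Iic (d/2)).indicator (fun _ => d/2)) μQ :=
    (integrable_const (d/2)).indicator measurableSet_Iic
  have hle : ∀ q, (Set.Iic (d/2)).indicator (fun _ => d/2) q ≤ max (d - q) 0 := by
    intro q
    by_cases hq : q ∈ Set.Iic (d/2)
    · rw [Set.indicator_of_mem hq]
      simp only [Set.mem_Iic] at hq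
      exact le_max_of_le_left (by linarith)
    · rw [Set.indicator_of_notMem hq]
      exact le_max_right _ _
  have hmono := integral_mono hind (integrable_maxfun μQ hae d) hle
  have hcalc : ∫ q, (Set.Iic (d/2)).indicator (fun _ => d/2) q ∂μQ
      = (μQ (Set.Iic (d/2))).toReal * (d/2) := by
    rw [integral_indicator_const (d/2) measurableSet_Iic, smul_eq_mul]; rfl
  have hQ : 0 < Qfun μQ (d/2) := hQ1b _ (by linarith)
  calc (0:ℝ) < (μQ (Set.Iic (d/2))).toReal * (d/2) :=
        mul_pos hQ (by linarith)
    _ = _ := hcalc.symm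
    _ ≤ _ := hmono

theorem stmt0 {A : Type*} [Fintype A] [DecidableEq A] [Nonempty A]
    (P : A → Finset A → ℝ) (μQ : Measure ℝ) [IsProbabilityMeasure μQ]
    -- `P a` is a probability mass function on the subsets of `𝒜 ∖ {a}` with `P a ∅ = 0`
    (hPnn : ∀ a A', 0 ≤ P a A')
    (hPsupp : ∀ a A', ¬ A' ⊆ Finset.univ.erase a → P a A' = 0)
    (hPempty : ∀ a, P a (∅ : Finset A) = 0)
    (hPsum : ∀ a, ∑ A' ∈ (Finset.univ.erase a).powerset, P a A' = 1)
    -- Assumption Q1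
    (hQ1a : ∀ q : ℝ, q < 0 → Qfun μQ q = 0)
    (hQ1b : ∀ q : ℝ, 0 < q → 0 < Qfun μQ q)
    -- Assumption A1-i
    (hA1i : ∀ a b : A, b ≠ a →
      0 < ∑ A' ∈ (Finset.univ.erase a).powerset.filter (fun A' => b ∈ A'), P a A')
    (π : A → ℝ) (a : A) :
    0 ≤ gain P μQ π a ∧
      (gain P μQ π a = 0 ↔ π a = Finset.univ.sup' Finset.univ_nonempty π) := by
  have hae := ae_nonneg_of_Q1 μQ hQ1a
  have hterm_nn : ∀ A' ∈ (Finset.univ.erase a).powerset,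
      0 ≤ P a A' * ∫ q, max (piStar π A' - π a - q) 0 ∂μQ := by
    intro A' _
    exact mul_nonneg (hPnn a A') (integral_maxfun_nonneg μQ _)
  have hnn : 0 ≤ gain P μQ π a := Finset.sum_nonneg hterm_nn
  refine ⟨hnn, ?_, ?_⟩
  · -- gain = 0 → π a is the max
    intro hg
    by_contra hne
    have hlt : π a < Finset.univ.sup' Finset.univ_nonempty π :=
      lt_of_le_of_ne (Finset.le_sup' π (Finset.mem_univ a)) hne
    obtain ⟨b, -, hb⟩ := Finset.exists_mem_eq_sup' Finset.univ_nonempty π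
    have hba : b ≠ a := by
      intro h; rw [h] at hb; rw [hb] at hlt; exact lt_irrefl _ hlt
    obtain ⟨A', hA'mem, hA'ne⟩ :=
      Finset.exists_ne_zero_of_sum_ne_zero (ne_of_gt (hA1i a b hba))
    rw [Finset.mem_filter] at hA'mem
    have hPpos : 0 < P a A' := lt_of_le_of_ne (hPnn a A') (Ne.symm hA'ne)
    have hbA' : b ∈ A' := hA'mem.2
    have hA'nonempty : A'.Nonempty := ⟨b, hbA'⟩
    have hstar : π a < piStar π A' := by
      unfold piStar
      rw [dif_pos hA'nonempty]
      calc π a < Finset.univ.sup' Finset.univ_nonempty π := hlt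
        _ = π b := hb
        _ ≤ A'.sup' hA'nonempty π := Finset.le_sup' π hbA'
    have hintpos : 0 < ∫ q, max (piStar π A' - π a - q) 0 ∂μQ := by
      have := integral_maxfun_pos μQ hae hQ1b (piStar π A' - π a) (by linarith)
      simpa [sub_sub] using this
    have htermpos : 0 < P a A' * ∫ q, max (piStar π A' - π a - q) 0 ∂μQ :=
      mul_pos hPpos hintpos
    have : P a A' * ∫ q, max (piStar π A' - π a - q) 0 ∂μQ = 0 := by
      have := (Finset.sum_eq_zero_iff_of_nonneg hterm_nn).1 hg A' hA'mem.1
      exact this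
    linarith
  · -- π a is the max → gain = 0
    intro hmax
    unfold gain
    refine Finset.sum_eq_zero fun A' hA' => ?_
    by_cases hA'e : A' = ∅
    · rw [hA'e, hPempty]; ring
    · have hA'ne : A'.Nonempty := Finset.nonempty_iff_ne_empty.2 hA'e
      have hd : piStar π A' - π a ≤ 0 := by
        unfold piStar
        rw [dif_pos hA'ne, sub_nonpos, hmax]
        exact Finset.sup'_le _ _ fun b _ => Finset.le_sup' π (Finset.mem_univ b)
      have : ∫ q, max (piStar π A' - π a - q) 0 ∂μQ = 0 := by
        have := integral_maxfun_zero μQ hae (piStar π A' - π a) hd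
        simpa [sub_sub] using this
      rw [this, mul_zero]
end

section
/- Under Assumptions Q1, A1-i and A1-ii, for every payoff vector π ∈ ℝ^𝒜 and all actions a, b ∈ 𝒜: if π_a ≤ π_b then g_{b*}[π] ≤ g_{a*}[π]; and if π_a < π_b then g_{b*}[π] < g_{a*}[π]. -/
open MeasureTheory Finset
open scoped Classical

/-! ### Auxiliary analytic lemmas -/

/-- `f(x) = ∫ max(x - q, 0) dμ_Q`. -/
noncomputable def fInt (μQ : Measure ℝ) (x : ℝ) : ℝ := ∫ q, max (x - q) 0 ∂μQ

section FInt
set_option linter.unusedSectionVars false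
variable (μQ : Measure ℝ) [IsProbabilityMeasure μQ]

lemma null_neg (hQ1a : ∀ q : ℝ, q < 0 → Qfun μQ q = 0) : μQ (Set.Iio (0:ℝ)) = 0 := by
  have h : ∀ q : ℝ, q < 0 → μQ (Set.Iic q) = 0 := by
    intro q hq
    have h0 := hQ1a q hq
    rw [Qfun] at h0
    exact ((ENNReal.toReal_eq_zero_iff _).mp h0).resolve_right (measure_ne_top _ _)
  have hset : Set.Iio (0:ℝ) = ⋃ n : ℕ, Set.Iic (-(1:ℝ)/(n+1)) := by
    ext x
    simp only [Set.mem_Iio, Set.mem_iUnion, Set.mem_Iic]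
    constructor
    · intro hx
      obtain ⟨n, hn⟩ := exists_nat_gt (-1/x)
      refine ⟨n, ?_⟩
      have h1 : (0:ℝ) < (n:ℝ)+1 := by positivity
      rw [le_div_iff₀ h1]
      have hxne : x ≠ 0 := ne_of_lt hx
      have hmul : (-1/x) * (-x) = 1 := by field_simp
      nlinarith [mul_lt_mul_of_pos_right hn (neg_pos.mpr hx)]
    · rintro ⟨n, hn⟩
      have h1 : (0:ℝ) < (n:ℝ)+1 := by positivity
      have : -(1:ℝ)/((n:ℝ)+1) < 0 := div_neg_of_neg_of_pos (by norm_num) h1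
      linarith
  rw [hset]
  exact measure_iUnion_null fun n => h _ (div_neg_of_neg_of_pos (by norm_num) (by positivity))

lemma ae_nn (hn : μQ (Set.Iio (0:ℝ)) = 0) : ∀ᵐ q ∂μQ, (0:ℝ) ≤ q := by
  rw [ae_iff]
  simpa [not_le] using (show μQ {a : ℝ | a < 0} = 0 from hn)

lemma fInt_integrable (hn : μQ (Set.Iio (0:ℝ)) = 0) (x : ℝ) :
    Integrable (fun q => max (x - q) 0) μQ := by
  refine Integrable.mono' (integrable_const (max x 0))
    ((continuous_const.sub continuous_id).max continuous_const).aestronglyMeasurable ?_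
  filter_upwards [ae_nn μQ hn] with q hq
  rw [Real.norm_eq_abs, abs_of_nonneg (le_max_right _ _)]
  exact max_le_max (by linarith) le_rfl

lemma fInt_nonneg (x : ℝ) : 0 ≤ fInt μQ x :=
  integral_nonneg fun _ => le_max_right _ _

lemma fInt_mono (hn : μQ (Set.Iio (0:ℝ)) = 0) {x y : ℝ} (hxy : x ≤ y) :
    fInt μQ x ≤ fInt μQ y :=
  integral_mono (fInt_integrable μQ hn x) (fInt_integrable μQ hn y)
    (fun q => max_le_max (by linarith) le_rfl)

lemma fInt_nonpos (hn : μQ (Set.Iio (0:ℝ)) = 0) {x : ℝ} (hx : x ≤ 0) : fInt μQ x = 0 := by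
  rw [fInt]
  refine (integral_eq_zero_iff_of_nonneg (fun q => le_max_right _ _)
    (fInt_integrable μQ hn x)).mpr ?_
  filter_upwards [ae_nn μQ hn] with q hq
  simp only [Pi.zero_apply]
  exact max_eq_right (by linarith)

lemma fInt_add_le (hn : μQ (Set.Iio (0:ℝ)) = 0) {x y : ℝ} (hx : 0 ≤ x) (hxy : x < y) :
    fInt μQ x + (y - x)/2 * (μQ (Set.Iic ((x+y)/2))).toReal ≤ fInt μQ y := by
  have hind : Integrable (Set.indicator (Set.Iic ((x+y)/2)) (fun _ => (y-x)/2)) μQ :=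
    (integrable_const _).indicator measurableSet_Iic
  have hle : ∀ q, max (x - q) 0 + Set.indicator (Set.Iic ((x+y)/2)) (fun _ => (y-x)/2) q
      ≤ max (y - q) 0 := by
    intro q
    by_cases hq : q ∈ Set.Iic ((x+y)/2)
    · rw [Set.indicator_of_mem hq]
      simp only [Set.mem_Iic] at hq
      rcases le_or_gt q x with h | h
      · rw [max_eq_left (by linarith), max_eq_left (by linarith)]; linarith
      · rw [max_eq_right (by linarith)]
        have : (y-x)/2 ≤ y - q := by linarith
        calc 0 + (y-x)/2 ≤ y - q := by linarith
          _ ≤ max (y - q) 0 := le_max_left _ _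
    · rw [Set.indicator_of_notMem hq, add_zero]
      exact max_le_max (by linarith) le_rfl
  have hmono := integral_mono ((fInt_integrable μQ hn x).add hind)
    (fInt_integrable μQ hn y) hle
  simp only [Pi.add_apply] at hmono
  rw [integral_add (fInt_integrable μQ hn x) hind, integral_indicator measurableSet_Iic,
    setIntegral_const, smul_eq_mul, mul_comm] at hmono
  exact hmono

lemma fInt_lt (hn : μQ (Set.Iio (0:ℝ)) = 0) (hQ1b : ∀ q : ℝ, 0 < q → 0 < Qfun μQ q)
    {x y : ℝ} (hxy : x < y) (hy : 0 < y) : fInt μQ x < fInt μQ y := by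
  rcases le_or_gt x 0 with h | h
  · rw [fInt_nonpos μQ hn h]
    have h0 := fInt_add_le μQ hn (le_refl (0:ℝ)) hy
    rw [fInt_nonpos μQ hn (le_refl (0:ℝ))] at h0
    have hQ : 0 < (μQ (Set.Iic ((0+y)/2))).toReal := hQ1b _ (by linarith)
    nlinarith
  · have h0 := fInt_add_le μQ hn h.le hxy
    have hQ : 0 < (μQ (Set.Iic ((x+y)/2))).toReal := hQ1b _ (by linarith)
    nlinarith

end FInt

/-! ### Auxiliary combinatorial lemmas -/

section PiStar
variable {A : Type*} [DecidableEq A] (π : A → ℝ)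

lemma piStar_of_nonempty {S : Finset A} (h : S.Nonempty) : piStar π S = S.sup' h π :=
  dif_pos h

lemma piStar_le {S : Finset A} (hS : S.Nonempty) {t : ℝ} (h : ∀ c ∈ S, π c ≤ t) :
    piStar π S ≤ t := by
  rw [piStar_of_nonempty π hS]; exact Finset.sup'_le _ _ h

lemma le_piStar {S : Finset A} {c : A} (hc : c ∈ S) : π c ≤ piStar π S := by
  rw [piStar_of_nonempty π ⟨c, hc⟩]; exact Finset.le_sup' _ hc

lemma piStar_singleton (c : A) : piStar π {c} = π c := by
  rw [piStar_of_nonempty π ⟨c, mem_singleton_self c⟩, Finset.sup'_singleton]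

/-- If `X ∩ H` is nonempty, where `H` collects exactly the actions with payoff above `t`,
then the max over `X` equals the max over `X ∩ H`. -/
lemma piStar_inter {t : ℝ} {H X : Finset A} (hHmem : ∀ c, c ∈ H ↔ t < π c)
    (h : (X ∩ H).Nonempty) :
    piStar π X = piStar π (X ∩ H) := by
  have hX : X.Nonempty := h.mono inter_subset_left
  apply le_antisymm
  · rw [piStar_of_nonempty π hX]
    apply Finset.sup'_le
    intro c hc
    rcases le_or_gt (π c) t with h1 | h1
    · obtain ⟨d, hd⟩ := h
      have hdH : t < π d := (hHmem d).mp (mem_inter.mp hd).2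
      exact le_trans (le_trans h1 hdH.le) (le_piStar π hd)
    · exact le_piStar π (mem_inter.mpr ⟨hc, (hHmem c).mpr h1⟩)
  · rw [piStar_of_nonempty π h]
    exact Finset.sup'_le _ _ fun c hc => le_piStar π (mem_inter.mp hc).1

/-- Pointwise telescoping step. -/
lemma phi_cons_step (f : ℝ → ℝ) (tb : ℝ) (c : A) (S X : Finset A)
    (hc : ∀ d ∈ S, π c ≤ π d) :
    (if (X ∩ insert c S).Nonempty then f (piStar π (X ∩ insert c S) - tb) else 0)
      = (if (X ∩ S).Nonempty then f (piStar π (X ∩ S) - tb) else 0)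
        + f (π c - tb) * ((if (X ∩ insert c S).Nonempty then (1:ℝ) else 0)
            - (if (X ∩ S).Nonempty then (1:ℝ) else 0)) := by
  by_cases h2 : (X ∩ S).Nonempty
  · have h1 : (X ∩ insert c S).Nonempty :=
      h2.mono (inter_subset_inter (Finset.Subset.refl X) (subset_insert c S))
    rw [if_pos h1, if_pos h2, if_pos h1, if_pos h2]
    have hps : piStar π (X ∩ insert c S) = piStar π (X ∩ S) := by
      by_cases hcX : c ∈ X
      · have heq : X ∩ insert c S = insert c (X ∩ S) := by
          ext d; simp only [mem_inter, mem_insert, Finset.mem_insert]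
          constructor
          · rintro ⟨hdX, rfl | hd⟩
            · exact Or.inl rfl
            · exact Or.inr ⟨hdX, hd⟩
          · rintro (rfl | hd)
            · exact ⟨hcX, Or.inl rfl⟩
            · obtain ⟨hdX, hdS⟩ := hd
              exact ⟨hdX, Or.inr hdS⟩
        rw [heq]
        apply le_antisymm
        · apply piStar_le π (h2.mono (subset_insert c _))
          intro d hd
          rcases mem_insert.mp hd with rfl | hd'
          · obtain ⟨e, he⟩ := h2
            exact le_trans (hc e (mem_inter.mp he).2) (le_piStar π he)
          · exact le_piStar π hd'
        · apply piStar_le π h2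
          intro d hd
          exact le_piStar π (mem_insert_of_mem hd : d ∈ insert c (X ∩ S))
      · have heq : X ∩ insert c S = X ∩ S := by
          ext d; simp only [mem_inter, mem_insert]
          constructor
          · rintro ⟨hdX, hd⟩
            rcases hd with rfl | hd
            · exact absurd hdX hcX
            · exact ⟨hdX, hd⟩
          · rintro ⟨hdX, hd⟩; exact ⟨hdX, Or.inr hd⟩
        rw [heq]
    rw [hps]; ring
  · by_cases h1 : (X ∩ insert c S).Nonempty
    · rw [if_pos h1, if_neg h2, if_pos h1, if_neg h2]
      have hXS : X ∩ S = ∅ := not_nonempty_iff_eq_empty.mp h2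
      have hcX : c ∈ X := by
        obtain ⟨e, he⟩ := h1
        obtain ⟨heX, heI⟩ := mem_inter.mp he
        rcases mem_insert.mp heI with rfl | heS
        · exact heX
        · exact absurd (mem_inter.mpr ⟨heX, heS⟩) (by simp [hXS])
      have heq : X ∩ insert c S = {c} := by
        ext d
        simp only [mem_inter, mem_insert, mem_singleton]
        constructor
        · rintro ⟨hdX, rfl | hd⟩
          · rfl
          · exact absurd (mem_inter.mpr ⟨hdX, hd⟩) (by simp [hXS])
        · rintro rfl
          exact ⟨hcX, Or.inl rfl⟩
      rw [heq, piStar_singleton]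
      ring
    · rw [if_neg h1, if_neg h2, if_neg h1, if_neg h2]; ring

end PiStar

/-- The key transfer lemma: sums of `P · φ` over decision sets of `a` and of `b`
coincide, where `φ` only depends on the intersection with a set of actions
avoiding both `a` and `b`, via a telescoping along a sorted list. -/
lemma transfer {A : Type*} [Fintype A] [DecidableEq A]
    (P : A → Finset A → ℝ) (f : ℝ → ℝ) (π : A → ℝ) (a b : A)
    (hA1ii : ∀ S : Finset A, S ⊆ Finset.univ \ {a, b} →
      ∑ X ∈ (Finset.univ.erase a).powerset.filter (fun X => (X ∩ S).Nonempty), P a X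
        = ∑ X ∈ (Finset.univ.erase b).powerset.filter (fun X => (X ∩ S).Nonempty), P b X)
    (l : List A) (hsort : l.Pairwise (fun x y => π x ≤ π y))
    (hmem : ∀ c ∈ l, c ≠ a ∧ c ≠ b) :
    ∑ X ∈ (Finset.univ.erase a).powerset, P a X *
        (if (X ∩ l.toFinset).Nonempty then f (piStar π (X ∩ l.toFinset) - π b) else 0)
      = ∑ X ∈ (Finset.univ.erase b).powerset, P b X *
        (if (X ∩ l.toFinset).Nonempty then f (piStar π (X ∩ l.toFinset) - π b) else 0) := by
  induction l with
  | nil => simp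
  | cons c l ih =>
    have hsc := List.pairwise_cons.mp hsort
    have hc : ∀ d ∈ l.toFinset, π c ≤ π d := fun d hd => hsc.1 d (List.mem_toFinset.mp hd)
    have hmem' : ∀ d ∈ l, d ≠ a ∧ d ≠ b := fun d hd => hmem d (List.mem_cons_of_mem _ hd)
    have hS : l.toFinset ⊆ Finset.univ \ ({a, b} : Finset A) := by
      intro d hd
      rcases hmem' d (List.mem_toFinset.mp hd) with ⟨h1, h2⟩
      simp [Finset.mem_sdiff, h1, h2]
    have hS' : insert c l.toFinset ⊆ Finset.univ \ ({a, b} : Finset A) := by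
      intro d hd
      rcases Finset.mem_insert.mp hd with rfl | hd'
      · rcases hmem d List.mem_cons_self with ⟨h1, h2⟩
        simp [Finset.mem_sdiff, h1, h2]
      · exact hS hd'
    have hF : ∀ S : Finset A, S ⊆ Finset.univ \ ({a, b} : Finset A) →
        ∑ X ∈ (Finset.univ.erase a).powerset,
            P a X * (if (X ∩ S).Nonempty then (1:ℝ) else 0)
          = ∑ X ∈ (Finset.univ.erase b).powerset,
            P b X * (if (X ∩ S).Nonempty then (1:ℝ) else 0) := by
      intro S hSsub
      have h0 := hA1ii S hSsub
      simp only [mul_ite, mul_one, mul_zero, ← Finset.sum_filter]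
      exact h0
    have expand : ∀ e : A,
        ∑ X ∈ (Finset.univ.erase e).powerset, P e X *
            (if (X ∩ (c :: l).toFinset).Nonempty then
              f (piStar π (X ∩ (c :: l).toFinset) - π b) else 0)
          = (∑ X ∈ (Finset.univ.erase e).powerset, P e X *
              (if (X ∩ l.toFinset).Nonempty then f (piStar π (X ∩ l.toFinset) - π b) else 0))
            + f (π c - π b) *
              ((∑ X ∈ (Finset.univ.erase e).powerset, P e X *
                  (if (X ∩ insert c l.toFinset).Nonempty then (1:ℝ) else 0))
                - (∑ X ∈ (Finset.univ.erase e).powerset, P e X *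
                  (if (X ∩ l.toFinset).Nonempty then (1:ℝ) else 0))) := by
      intro e
      rw [mul_sub, Finset.mul_sum, Finset.mul_sum, ← Finset.sum_sub_distrib,
        ← Finset.sum_add_distrib]
      apply Finset.sum_congr rfl
      intro X _
      rw [List.toFinset_cons, phi_cons_step π f (π b) c l.toFinset X hc]
      ring
    rw [expand a, expand b, ih hsc.2 hmem', hF _ hS', hF _ hS]

theorem stmt1 {A : Type*} [Fintype A] [DecidableEq A] [Nonempty A]
    (P : A → Finset A → ℝ) (μQ : Measure ℝ) [IsProbabilityMeasure μQ]
    (hPnn : ∀ a A', 0 ≤ P a A')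
    (hPsupp : ∀ a A', ¬ A' ⊆ Finset.univ.erase a → P a A' = 0)
    (hPempty : ∀ a, P a (∅ : Finset A) = 0)
    (hPsum : ∀ a, ∑ A' ∈ (Finset.univ.erase a).powerset, P a A' = 1)
    -- Assumption Q1
    (hQ1a : ∀ q : ℝ, q < 0 → Qfun μQ q = 0)
    (hQ1b : ∀ q : ℝ, 0 < q → 0 < Qfun μQ q)
    -- Assumption A1-i
    (hA1i : ∀ a b : A, b ≠ a →
      0 < ∑ A' ∈ (Finset.univ.erase a).powerset.filter (fun A' => b ∈ A'), P a A')
    -- Assumption A1-ii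
    (hA1ii : ∀ a b : A, ∀ S : Finset A, S ⊆ Finset.univ \ {a, b} →
      ∑ A' ∈ (Finset.univ.erase a).powerset.filter (fun A' => (A' ∩ S).Nonempty), P a A'
        = ∑ A' ∈ (Finset.univ.erase b).powerset.filter (fun A' => (A' ∩ S).Nonempty), P b A')
    (π : A → ℝ) (a b : A) :
    (π a ≤ π b → gain P μQ π b ≤ gain P μQ π a) ∧
      (π a < π b → gain P μQ π b < gain P μQ π a) := by
  have hn : μQ (Set.Iio (0:ℝ)) = 0 := null_neg μQ hQ1a
  set H : Finset A := Finset.univ.filter (fun c => π b < π c) with hHdef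
  have hHmem : ∀ c, c ∈ H ↔ π b < π c := by
    intro c; rw [hHdef, Finset.mem_filter]; simp
  -- `gain` written via `fInt`
  have hgain : ∀ e : A, gain P μQ π e
      = ∑ X ∈ (Finset.univ.erase e).powerset, P e X * fInt μQ (piStar π X - π e) := by
    intro e; rfl
  -- main transfer identity, valid whenever `π a ≤ π b`
  have main : π a ≤ π b → gain P μQ π b
      = ∑ X ∈ (Finset.univ.erase a).powerset, P a X *
          (if (X ∩ H).Nonempty then fInt μQ (piStar π (X ∩ H) - π b) else 0) := by
    intro hab
    -- build a sorted list enumerating `H`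
    set r : A → A → Prop := fun x y => π x ≤ π y with hr
    haveI : IsTotal A r := ⟨fun x y => le_total (π x) (π y)⟩
    haveI : IsTrans A r := ⟨fun _ _ _ h1 h2 => le_trans h1 h2⟩
    set l : List A := List.insertionSort r H.toList with hl
    have hperm : l.Perm H.toList := List.perm_insertionSort r _
    have hlf : l.toFinset = H := by
      ext d; rw [List.mem_toFinset, hperm.mem_iff, Finset.mem_toList]
    have hsort : l.Pairwise r := List.pairwise_insertionSort r H.toList
    have hmem : ∀ c ∈ l, c ≠ a ∧ c ≠ b := by
      intro c hcl
      have hcH : π b < π c := (hHmem c).mp (hlf ▸ List.mem_toFinset.mpr hcl)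
      constructor
      · intro h; rw [h] at hcH; linarith
      · intro h; rw [h] at hcH; exact lt_irrefl _ hcH
    have htrans := transfer P (fInt μQ) π a b (hA1ii a b) l hsort hmem
    rw [hlf] at htrans
    rw [hgain b, htrans]
    apply Finset.sum_congr rfl
    intro X hX
    by_cases hXe : (X ∩ H).Nonempty
    · rw [if_pos hXe, ← piStar_inter π hHmem hXe]
    · rw [if_neg hXe, mul_zero]
      by_cases hXne : X.Nonempty
      · have hple : piStar π X ≤ π b := by
          apply piStar_le π hXne
          intro c hc
          by_contra hcon
          push_neg at hcon
          exact hXe ⟨c, mem_inter.mpr ⟨hc, (hHmem c).mpr hcon⟩⟩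
        rw [fInt_nonpos μQ hn (by linarith), mul_zero]
      · rw [not_nonempty_iff_eq_empty.mp hXne, hPempty b, zero_mul]
  -- pointwise comparison on the `a` side
  have hpt : π a ≤ π b → ∀ X ∈ (Finset.univ.erase a).powerset,
      P a X * (if (X ∩ H).Nonempty then fInt μQ (piStar π (X ∩ H) - π b) else 0)
        ≤ P a X * fInt μQ (piStar π X - π a) := by
    intro hab X _
    by_cases hXe : (X ∩ H).Nonempty
    · rw [if_pos hXe, ← piStar_inter π hHmem hXe]
      exact mul_le_mul_of_nonneg_left
        (fInt_mono μQ hn (by linarith)) (hPnn a X)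
    · rw [if_neg hXe, mul_zero]
      exact mul_nonneg (hPnn a X) (fInt_nonneg μQ _)
  constructor
  · intro hab
    rw [main hab, hgain a]
    exact Finset.sum_le_sum (hpt hab)
  · intro hab
    have hba : b ≠ a := by intro h; rw [h] at hab; exact lt_irrefl _ hab
    obtain ⟨X₀, hX₀mem, hX₀ne⟩ :=
      Finset.exists_ne_zero_of_sum_ne_zero (hA1i a b hba).ne'
    obtain ⟨hX₀pow, hbX₀⟩ := Finset.mem_filter.mp hX₀mem
    have hP0 : 0 < P a X₀ := lt_of_le_of_ne (hPnn a X₀) (Ne.symm hX₀ne)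
    have hbpi : π b ≤ piStar π X₀ := le_piStar π hbX₀
    rw [main hab.le, hgain a]
    apply Finset.sum_lt_sum (hpt hab.le)
    refine ⟨X₀, hX₀pow, ?_⟩
    by_cases hXe : (X₀ ∩ H).Nonempty
    · rw [if_pos hXe, ← piStar_inter π hHmem hXe]
      exact mul_lt_mul_of_pos_left
        (fInt_lt μQ hn hQ1b (by linarith) (by linarith)) hP0
    · rw [if_neg hXe, mul_zero]
      have hfpos : 0 < fInt μQ (piStar π X₀ - π a) := by
        have := fInt_lt μQ hn hQ1b (x := 0) (y := piStar π X₀ - π a)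
          (by linarith) (by linarith)
        rwa [fInt_nonpos μQ hn (le_refl (0:ℝ))] at this
      exact mul_pos hP0 hfpos
end
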